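/- arXiv:2005.12665 — 2 statements merged into one kernel-verified Lean document; each statement's English description precedes it below -/
import Mathlib

section
/- Let H be a complex Hilbert space and let G be a subgroup of the group of unitary operators (linear isometric bijections) of H. Assume G is a dislocation group, i.e., for every sequence (g_n) in G for which it is NOT the case that ⟨g_n x, y⟩ → 0 for all x, y ∈ H, there exist a strictly increasing sequence of indices (n_k) and an element g ∈ G such that ‖g_{n_k} x − g x‖ → 0 for every x ∈ H. Equip the set H/G of orbits of the natural action of G on H with the quotient topology and let P : H → H/G denote the canonical projection. Then for every compact subset K̃ of H/G there exists a compact subset K of H with P(K) = K̃. -/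
open Filter Topology

noncomputable section

namespace DisAux

variable {H : Type*} [NormedAddCommGroup H] [InnerProductSpace ℂ H]
variable (G : Subgroup (H ≃ₗᵢ[ℂ] H))

def Rel : H → H → Prop := fun x y => ∃ g : G, (g : H ≃ₗᵢ[ℂ] H) y = x

def D (x y : H) : ℝ := ⨅ g : G, ‖x - (g : H ≃ₗᵢ[ℂ] H) y‖

variable {G}

lemma act_mul (a b : G) (z : H) :
    ((a * b : G) : H ≃ₗᵢ[ℂ] H) z = (a : H ≃ₗᵢ[ℂ] H) ((b : H ≃ₗᵢ[ℂ] H) z) := by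
  simp [LinearIsometryEquiv.coe_mul]

lemma act_inv (a : G) (z : H) :
    ((a⁻¹ : G) : H ≃ₗᵢ[ℂ] H) ((a : H ≃ₗᵢ[ℂ] H) z) = z := by
  have := act_mul (a⁻¹) a z
  rw [inv_mul_cancel] at this
  simpa using this.symm

lemma act_norm (a : G) (z w : H) :
    ‖(a : H ≃ₗᵢ[ℂ] H) z - (a : H ≃ₗᵢ[ℂ] H) w‖ = ‖z - w‖ := by
  rw [← map_sub]
  exact (a : H ≃ₗᵢ[ℂ] H).norm_map _

lemma D_bdd (x y : H) : BddBelow (Set.range fun g : G => ‖x - (g : H ≃ₗᵢ[ℂ] H) y‖) :=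
  ⟨0, by rintro _ ⟨g, rfl⟩; positivity⟩

lemma D_nonneg (x y : H) : 0 ≤ D G x y :=
  Real.iInf_nonneg fun _ => norm_nonneg _

lemma D_le (x y : H) (g : G) : D G x y ≤ ‖x - (g : H ≃ₗᵢ[ℂ] H) y‖ :=
  ciInf_le (D_bdd x y) g

lemma D_lt (x y : H) {ε : ℝ} (hε : 0 < ε) :
    ∃ g : G, ‖x - (g : H ≃ₗᵢ[ℂ] H) y‖ < D G x y + ε :=
  exists_lt_of_ciInf_lt (lt_add_of_pos_right _ hε)

lemma D_self (x : H) : D G x x = 0 := by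
  refine le_antisymm ?_ (D_nonneg x x)
  have := D_le (G := G) x x 1
  simpa using this

lemma D_norm_add (x y z : H) : D G x z ≤ ‖x - y‖ + D G y z := by
  refine le_of_forall_pos_le_add fun ε hε => ?_
  obtain ⟨g, hg⟩ := D_lt (G := G) y z hε
  calc D G x z ≤ ‖x - (g : H ≃ₗᵢ[ℂ] H) z‖ := D_le x z g
    _ ≤ ‖x - y‖ + ‖y - (g : H ≃ₗᵢ[ℂ] H) z‖ := by
        have := norm_sub_le_norm_sub_add_norm_sub x y ((g : H ≃ₗᵢ[ℂ] H) z)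
        linarith [norm_sub_le (x - y) (y - (g : H ≃ₗᵢ[ℂ] H) z)]
    _ ≤ ‖x - y‖ + (D G y z + ε) := by linarith
    _ = ‖x - y‖ + D G y z + ε := by ring

lemma D_actl_le (g : G) (x y : H) : D G ((g : H ≃ₗᵢ[ℂ] H) x) y ≤ D G x y := by
  refine le_of_forall_pos_le_add fun ε hε => ?_
  obtain ⟨h, hh⟩ := D_lt (G := G) x y hε
  calc D G ((g : H ≃ₗᵢ[ℂ] H) x) y ≤ ‖(g : H ≃ₗᵢ[ℂ] H) x - ((g * h : G) : H ≃ₗᵢ[ℂ] H) y‖ :=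
        D_le _ y (g * h)
    _ = ‖x - (h : H ≃ₗᵢ[ℂ] H) y‖ := by rw [act_mul]; exact act_norm g _ _
    _ ≤ D G x y + ε := le_of_lt hh

lemma D_actl (g : G) (x y : H) : D G ((g : H ≃ₗᵢ[ℂ] H) x) y = D G x y := by
  refine le_antisymm (D_actl_le g x y) ?_
  have := D_actl_le g⁻¹ ((g : H ≃ₗᵢ[ℂ] H) x) y
  rwa [act_inv] at this

lemma D_actr_le (g : G) (x y : H) : D G x ((g : H ≃ₗᵢ[ℂ] H) y) ≤ D G x y := by
  refine le_of_forall_pos_le_add fun ε hε => ?_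
  obtain ⟨h, hh⟩ := D_lt (G := G) x y hε
  have key : ((h * g⁻¹ : G) : H ≃ₗᵢ[ℂ] H) ((g : H ≃ₗᵢ[ℂ] H) y) = (h : H ≃ₗᵢ[ℂ] H) y := by
    rw [act_mul, act_inv]
  calc D G x ((g : H ≃ₗᵢ[ℂ] H) y)
      ≤ ‖x - ((h * g⁻¹ : G) : H ≃ₗᵢ[ℂ] H) ((g : H ≃ₗᵢ[ℂ] H) y)‖ := D_le _ _ _
    _ = ‖x - (h : H ≃ₗᵢ[ℂ] H) y‖ := by rw [key]
    _ ≤ D G x y + ε := le_of_lt hh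

lemma D_actr (g : G) (x y : H) : D G x ((g : H ≃ₗᵢ[ℂ] H) y) = D G x y := by
  refine le_antisymm (D_actr_le g x y) ?_
  have := D_actr_le g⁻¹ x ((g : H ≃ₗᵢ[ℂ] H) y)
  rwa [act_inv] at this

lemma D_comm_le (x y : H) : D G x y ≤ D G y x := by
  refine le_of_forall_pos_le_add fun ε hε => ?_
  obtain ⟨g, hg⟩ := D_lt (G := G) y x hε
  calc D G x y ≤ ‖x - ((g⁻¹ : G) : H ≃ₗᵢ[ℂ] H) y‖ := D_le _ _ _
    _ = ‖(g : H ≃ₗᵢ[ℂ] H) x - (g : H ≃ₗᵢ[ℂ] H) (((g⁻¹ : G) : H ≃ₗᵢ[ℂ] H) y)‖ :=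
        (act_norm g _ _).symm
    _ = ‖(g : H ≃ₗᵢ[ℂ] H) x - y‖ := by
        congr 1
        have := act_mul g g⁻¹ y
        rw [mul_inv_cancel] at this
        simpa using this.symm
    _ = ‖y - (g : H ≃ₗᵢ[ℂ] H) x‖ := norm_sub_rev _ _
    _ ≤ D G y x + ε := le_of_lt hg

lemma D_comm (x y : H) : D G x y = D G y x :=
  le_antisymm (D_comm_le x y) (D_comm_le y x)

lemma D_tri (x y z : H) : D G x z ≤ D G x y + D G y z := by
  refine le_of_forall_pos_le_add fun ε hε => ?_
  obtain ⟨g, hg⟩ := D_lt (G := G) x y hε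
  calc D G x z ≤ ‖x - (g : H ≃ₗᵢ[ℂ] H) y‖ + D G ((g : H ≃ₗᵢ[ℂ] H) y) z := D_norm_add _ _ _
    _ = ‖x - (g : H ≃ₗᵢ[ℂ] H) y‖ + D G y z := by rw [D_actl]
    _ ≤ D G x y + ε + D G y z := by linarith
    _ = D G x y + D G y z + ε := by ring

lemma rel_equiv : Equivalence (Rel G (H := H)) := by
  constructor
  · intro x; exact ⟨1, by simp⟩
  · rintro x y ⟨g, rfl⟩
    exact ⟨g⁻¹, act_inv g y⟩
  · rintro x y z ⟨g, rfl⟩ ⟨h, rfl⟩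
    exact ⟨g * h, (act_mul g h z).symm⟩

lemma mk_eq_mk {x y : H} : Quot.mk (Rel G) x = Quot.mk (Rel G) y ↔ Rel G x y := by
  rw [Quot.eq]
  exact (rel_equiv (G := G)).eqvGen_iff

lemma D_congr_left {x x' : H} (y : H) (h : Rel G x x') : D G x y = D G x' y := by
  obtain ⟨g, rfl⟩ := h
  exact D_actl g x' y

lemma D_congr_right (x : H) {y y' : H} (h : Rel G y y') : D G x y = D G x y' := by
  obtain ⟨g, rfl⟩ := h
  exact D_actr g x y'


variable (G)

def dQ (q p : Quot (Rel G (H := H))) : ℝ := D G q.out p.out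

variable {G}

lemma rel_out (x : H) : Rel G (Quot.mk (Rel G) x).out x :=
  mk_eq_mk.mp (Quot.out_eq _)

lemma dQ_mk (x y : H) : dQ G (Quot.mk (Rel G) x) (Quot.mk (Rel G) y) = D G x y := by
  rw [dQ, D_congr_left _ (rel_out x), D_congr_right _ (rel_out y)]

lemma dQ_self (q : Quot (Rel G (H := H))) : dQ G q q = 0 := D_self _

lemma dQ_nonneg (q p : Quot (Rel G (H := H))) : 0 ≤ dQ G q p := D_nonneg _ _

lemma dQ_comm (q p : Quot (Rel G (H := H))) : dQ G q p = dQ G p q := D_comm _ _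

lemma dQ_tri (q p s : Quot (Rel G (H := H))) : dQ G q s ≤ dQ G q p + dQ G p s := D_tri _ _ _

lemma dQ_le_norm (x y : H) : dQ G (Quot.mk (Rel G) x) (Quot.mk (Rel G) y) ≤ ‖x - y‖ := by
  rw [dQ_mk]
  have := D_le (G := G) x y 1
  simpa using this

lemma D_eq_zero (hdis : ∀ g : ℕ → G,
      ¬ (∀ x y : H, Tendsto (fun n => (inner ℂ ((g n : H ≃ₗᵢ[ℂ] H) x) y : ℂ)) atTop (𝓝 0)) →
      ∃ φ : ℕ → ℕ, StrictMono φ ∧ ∃ h : G,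
        ∀ x : H, Tendsto (fun k => ‖(g (φ k) : H ≃ₗᵢ[ℂ] H) x - (h : H ≃ₗᵢ[ℂ] H) x‖)
          atTop (𝓝 0))
    {x y : H} (h0 : D G x y = 0) : Rel G x y := by
  have hg : ∀ n : ℕ, ∃ g : G, ‖x - (g : H ≃ₗᵢ[ℂ] H) y‖ < 1 / (n + 1) := by
    intro n
    have hpos : (0:ℝ) < 1 / (n + 1) := by positivity
    obtain ⟨g, hg⟩ := D_lt (G := G) x y hpos
    exact ⟨g, by rwa [h0, zero_add] at hg⟩
  choose gs hgs using hg
  have hlim : Tendsto (fun n => ‖x - ((gs n : H ≃ₗᵢ[ℂ] H)) y‖) atTop (𝓝 0) := by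
    refine squeeze_zero (fun n => norm_nonneg _) (fun n => le_of_lt (hgs n)) ?_
    exact tendsto_one_div_add_atTop_nhds_zero_nat
  by_cases hx0 : x = 0
  · have hy0 : y = 0 := by
      have hyn : ∀ n : ℕ, ‖y‖ < 1 / (n + 1) := by
        intro n
        have := hgs n
        rw [hx0, zero_sub, norm_neg, (gs n : H ≃ₗᵢ[ℂ] H).norm_map] at this
        exact this
      have : ‖y‖ ≤ 0 := by
        refine ge_of_tendsto' tendsto_one_div_add_atTop_nhds_zero_nat fun n => le_of_lt (hyn n)
      simpa using le_antisymm this (norm_nonneg y)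
    exact hx0 ▸ hy0 ▸ ⟨1, by simp⟩
  · have hgy : Tendsto (fun n => ((gs n : H ≃ₗᵢ[ℂ] H)) y) atTop (𝓝 x) := by
      rw [tendsto_iff_norm_sub_tendsto_zero]
      simpa [norm_sub_rev] using hlim
    have hprem : ¬ (∀ u v : H,
        Tendsto (fun n => (inner ℂ ((gs n : H ≃ₗᵢ[ℂ] H) u) v : ℂ)) atTop (𝓝 0)) := by
      intro hall
      have h1 := hall y x
      have h2 : Tendsto (fun n => (inner ℂ ((gs n : H ≃ₗᵢ[ℂ] H) y) x : ℂ)) atTop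
          (𝓝 (inner ℂ x x)) := hgy.inner tendsto_const_nhds
      have := tendsto_nhds_unique h2 h1
      exact hx0 (inner_self_eq_zero.mp this)
    obtain ⟨φ, hφ, h, hh⟩ := hdis gs hprem
    have key : ‖x - (h : H ≃ₗᵢ[ℂ] H) y‖ = 0 := by
      have hb : ∀ k : ℕ, ‖x - (h : H ≃ₗᵢ[ℂ] H) y‖ ≤
          ‖x - (gs (φ k) : H ≃ₗᵢ[ℂ] H) y‖ + ‖(gs (φ k) : H ≃ₗᵢ[ℂ] H) y - (h : H ≃ₗᵢ[ℂ] H) y‖ := by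
        intro k
        exact norm_sub_le_norm_sub_add_norm_sub _ _ _
      have ht : Tendsto (fun k => ‖x - (gs (φ k) : H ≃ₗᵢ[ℂ] H) y‖ +
          ‖(gs (φ k) : H ≃ₗᵢ[ℂ] H) y - (h : H ≃ₗᵢ[ℂ] H) y‖) atTop (𝓝 (0 + 0)) := by
        refine Tendsto.add ?_ (hh y)
        exact hlim.comp hφ.tendsto_atTop
      rw [add_zero] at ht
      have := ge_of_tendsto' ht hb
      exact le_antisymm this (norm_nonneg _)
    exact ⟨h, by rw [← sub_eq_zero, ← norm_eq_zero]; rwa [norm_sub_rev] at key⟩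


lemma dQ_eq_zero (hdis : ∀ g : ℕ → G,
      ¬ (∀ x y : H, Tendsto (fun n => (inner ℂ ((g n : H ≃ₗᵢ[ℂ] H) x) y : ℂ)) atTop (𝓝 0)) →
      ∃ φ : ℕ → ℕ, StrictMono φ ∧ ∃ h : G,
        ∀ x : H, Tendsto (fun k => ‖(g (φ k) : H ≃ₗᵢ[ℂ] H) x - (h : H ≃ₗᵢ[ℂ] H) x‖)
          atTop (𝓝 0))
    {q p : Quot (Rel G (H := H))} (h0 : dQ G q p = 0) : q = p := by
  rw [← Quot.out_eq q, ← Quot.out_eq p]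
  exact Quot.sound (D_eq_zero hdis h0)

lemma contD (y : H) : Continuous fun x : H => D G x y := by
  have : LipschitzWith 1 fun x : H => D G x y := by
    refine LipschitzWith.of_dist_le_mul fun x x' => ?_
    simp only [Real.dist_eq, dist_eq_norm, NNReal.coe_one, one_mul, Real.norm_eq_abs]
    rw [abs_sub_le_iff]
    constructor
    · have := D_norm_add (G := G) x x' y; linarith
    · have := D_norm_add (G := G) x' x y
      rw [norm_sub_rev] at this; linarith
  exact this.continuous

lemma dQ_mk_left (x : H) (q0 : Quot (Rel G (H := H))) :
    dQ G (Quot.mk (Rel G) x) q0 = D G x q0.out :=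
  D_congr_left _ (rel_out x)

lemma isOpen_ball (q0 : Quot (Rel G (H := H))) (ε : ℝ) :
    IsOpen {q : Quot (Rel G (H := H)) | dQ G q q0 < ε} := by
  rw [isOpen_coinduced (f := Quot.mk (Rel G))]
  have : Quot.mk (Rel G) ⁻¹' {q : Quot (Rel G (H := H)) | dQ G q q0 < ε}
      = {x : H | D G x q0.out < ε} := by
    ext x
    simp only [Set.mem_preimage, Set.mem_setOf_eq, dQ_mk_left]
  rw [this]
  exact isOpen_lt (contD q0.out) continuous_const

lemma net {Kq : Set (Quot (Rel G (H := H)))} (hKq : IsCompact Kq) {ε : ℝ} (hε : 0 < ε) :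
    ∃ T : Set (Quot (Rel G (H := H))), T.Finite ∧ T ⊆ Kq ∧
      Kq ⊆ ⋃ s ∈ T, {q | dQ G q s < ε} := by
  obtain ⟨T, hT1, hT2, hT3⟩ := hKq.elim_finite_subcover_image
    (b := Kq) (c := fun s => {q | dQ G q s < ε})
    (fun s _ => isOpen_ball s ε)
    (fun q hq => Set.mem_biUnion hq (by simp [dQ_self, hε]))
  exact ⟨T, hT2, hT1, hT3⟩

lemma mem_of_approx (hdis : ∀ g : ℕ → G,
      ¬ (∀ x y : H, Tendsto (fun n => (inner ℂ ((g n : H ≃ₗᵢ[ℂ] H) x) y : ℂ)) atTop (𝓝 0)) →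
      ∃ φ : ℕ → ℕ, StrictMono φ ∧ ∃ h : G,
        ∀ x : H, Tendsto (fun k => ‖(g (φ k) : H ≃ₗᵢ[ℂ] H) x - (h : H ≃ₗᵢ[ℂ] H) x‖)
          atTop (𝓝 0))
    {Kq : Set (Quot (Rel G (H := H)))} (hKq : IsCompact Kq)
    {q : Quot (Rel G (H := H))} (happ : ∀ ε > 0, ∃ p ∈ Kq, dQ G q p < ε) : q ∈ Kq := by
  by_contra hq
  have hpos : ∀ s ∈ Kq, 0 < dQ G q s := by
    intro s hs
    rcases lt_or_eq_of_le (dQ_nonneg (G := G) q s) with h | h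
    · exact h
    · exact absurd (dQ_eq_zero hdis h.symm ▸ hs) hq
  obtain ⟨T, hT1, hT2, hT3⟩ := hKq.elim_finite_subcover_image
    (b := Kq) (c := fun s => {p | dQ G p s < dQ G q s / 2})
    (fun s _ => isOpen_ball s _)
    (fun p hp => Set.mem_biUnion hp (by simpa [dQ_self] using half_pos (hpos p hp)))
  -- T is nonempty or Kq is empty
  rcases Set.eq_empty_or_nonempty Kq with hKe | ⟨p0, hp0⟩
  · obtain ⟨p, hp, -⟩ := happ 1 one_pos
    rw [hKe] at hp; exact hp
  · have hTne : (hT2.toFinset).Nonempty := by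
      rcases hT3 hp0 with h
      rw [Set.mem_iUnion₂] at h
      obtain ⟨s, hs, -⟩ := h
      exact ⟨s, hT2.mem_toFinset.mpr hs⟩
    set δ : ℝ := (hT2.toFinset.image (fun s => dQ G q s / 2)).min' (hTne.image _) with hδdef
    have hδpos : 0 < δ := by
      obtain ⟨s, hsmem, hseq⟩ := Finset.mem_image.mp
        ((hT2.toFinset.image (fun s => dQ G q s / 2)).min'_mem (hTne.image _))
      rw [hδdef, ← hseq]
      exact half_pos (hpos s (hT1 (hT2.mem_toFinset.mp hsmem)))
    obtain ⟨p, hp, hqp⟩ := happ δ hδpos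
    rcases Set.mem_iUnion₂.mp (hT3 hp) with ⟨s, hs, hps⟩
    have hδle : δ ≤ dQ G q s / 2 :=
      Finset.min'_le _ _ (Finset.mem_image_of_mem _ (hT2.mem_toFinset.mpr hs))
    have htri := dQ_tri (G := G) q p s
    have : dQ G p s < dQ G q s / 2 := hps
    linarith

lemma pick_exists (q : Quot (Rel G (H := H))) (x : H) {ε : ℝ} (hε : 0 < ε) :
    ∃ y : H, Quot.mk (Rel G) y = q ∧ ‖y - x‖ < dQ G q (Quot.mk (Rel G) x) + ε := by
  have hq : dQ G q (Quot.mk (Rel G) x) = D G q.out x := by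
    rw [← Quot.out_eq q, dQ_mk, Quot.out_eq q]
  obtain ⟨g, hg⟩ := D_lt (G := G) q.out x hε
  refine ⟨((g⁻¹ : G) : H ≃ₗᵢ[ℂ] H) q.out, ?_, ?_⟩
  · have hrel : Rel G q.out (((g⁻¹ : G) : H ≃ₗᵢ[ℂ] H) q.out) := by
      refine ⟨g, ?_⟩
      have := act_inv (a := g⁻¹) (z := q.out)
      rwa [inv_inv] at this
    exact (Quot.sound hrel).symm.trans (Quot.out_eq q)
  · rw [hq]
    have h1 : ((g : H ≃ₗᵢ[ℂ] H)) (((g⁻¹ : G) : H ≃ₗᵢ[ℂ] H) q.out) = q.out := by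
      have := act_inv (a := g⁻¹) (z := q.out)
      rwa [inv_inv] at this
    calc ‖((g⁻¹ : G) : H ≃ₗᵢ[ℂ] H) q.out - x‖
        = ‖(g : H ≃ₗᵢ[ℂ] H) (((g⁻¹ : G) : H ≃ₗᵢ[ℂ] H) q.out) - (g : H ≃ₗᵢ[ℂ] H) x‖ :=
          (act_norm g _ _).symm
      _ = ‖q.out - (g : H ≃ₗᵢ[ℂ] H) x‖ := by rw [h1]
      _ < D G q.out x + ε := hg

theorem main [CompleteSpace H] (hdis : ∀ g : ℕ → G,
      ¬ (∀ x y : H, Tendsto (fun n => (inner ℂ ((g n : H ≃ₗᵢ[ℂ] H) x) y : ℂ)) atTop (𝓝 0)) →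
      ∃ φ : ℕ → ℕ, StrictMono φ ∧ ∃ h : G,
        ∀ x : H, Tendsto (fun k => ‖(g (φ k) : H ≃ₗᵢ[ℂ] H) x - (h : H ≃ₗᵢ[ℂ] H) x‖)
          atTop (𝓝 0))
    (Kq : Set (Quot (Rel G (H := H)))) (hKq : IsCompact Kq) :
    ∃ K : Set H, IsCompact K ∧ Quot.mk (Rel G) '' K = Kq := by
  classical
  set e : ℕ → ℝ := fun n => (2 : ℝ)⁻¹ ^ n with he_def
  have he_pos : ∀ n, 0 < e n := fun n => by positivity
  have he_succ : ∀ n, e (n + 1) = e n / 2 := fun n => by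
    simp only [he_def, pow_succ]; ring
  have he_lim : Tendsto e atTop (𝓝 0) :=
    tendsto_pow_atTop_nhds_zero_of_lt_one (by norm_num) (by norm_num)
  -- nets
  have hSex : ∀ n : ℕ, ∃ T : Set (Quot (Rel G (H := H))), T.Finite ∧ T ⊆ Kq ∧
      Kq ⊆ ⋃ s ∈ T, {q | dQ G q s < e n} := fun n => net hKq (he_pos n)
  choose S hSfin hSsub hScov using hSex
  -- pick function
  have hpick : ∀ (q : Quot (Rel G (H := H))) (x : H) (n : ℕ), ∃ y : H,
      Quot.mk (Rel G) y = q ∧ ‖y - x‖ < dQ G q (Quot.mk (Rel G) x) + e n :=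
    fun q x n => pick_exists q x (he_pos n)
  choose pk hpk1 hpk2 using hpick
  -- the tree of representatives
  let F : ℕ → Set H := fun n => Nat.rec (Quot.out '' S 0)
    (fun n Fn => (fun p : Quot (Rel G (H := H)) × H => pk p.1 p.2 n) ''
      {p | p.1 ∈ S (n + 1) ∧ p.2 ∈ Fn ∧ dQ G p.1 (Quot.mk (Rel G) p.2) ≤ 2 * e n}) n
  have hF0 : F 0 = Quot.out '' S 0 := rfl
  have hFs : ∀ n, F (n + 1) = (fun p : Quot (Rel G (H := H)) × H => pk p.1 p.2 n) ''
      {p | p.1 ∈ S (n + 1) ∧ p.2 ∈ F n ∧ dQ G p.1 (Quot.mk (Rel G) p.2) ≤ 2 * e n} :=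
    fun n => rfl
  have hFfin : ∀ n, (F n).Finite := by
    intro n
    induction n with
    | zero => rw [hF0]; exact (hSfin 0).image _
    | succ n ih =>
      rw [hFs n]
      refine Set.Finite.image _ (Set.Finite.subset ((hSfin (n + 1)).prod ih) ?_)
      rintro ⟨s, x⟩ ⟨h1, h2, h3⟩
      exact ⟨h1, h2⟩
  have hFKq : ∀ n, ∀ x ∈ F n, Quot.mk (Rel G) x ∈ Kq := by
    intro n
    cases n with
    | zero =>
      rw [hF0]
      rintro _ ⟨s, hs, rfl⟩
      rw [Quot.out_eq s]
      exact hSsub 0 hs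
    | succ n =>
      rw [hFs n]
      rintro _ ⟨⟨s, x⟩, ⟨h1, h2, h3⟩, rfl⟩
      rw [hpk1]
      exact hSsub (n + 1) h1
  have hFstep : ∀ n, ∀ y ∈ F (n + 1), ∃ x ∈ F n, ‖y - x‖ ≤ 3 * e n := by
    intro n
    rw [hFs n]
    rintro _ ⟨⟨s, x⟩, ⟨h1, h2, h3⟩, rfl⟩
    refine ⟨x, h2, ?_⟩
    have := hpk2 s x n
    simp only at this h3 ⊢
    linarith
  have hFchain : ∀ n m, ∀ y ∈ F (n + m), ∃ x ∈ F n, ‖y - x‖ ≤ 6 * (e n - e (n + m)) := by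
    intro n m
    induction m with
    | zero => intro y hy; exact ⟨y, hy, by simp⟩
    | succ m ih =>
      intro y hy
      obtain ⟨z, hz, hyz⟩ := hFstep (n + m) y hy
      obtain ⟨x, hx, hzx⟩ := ih z hz
      refine ⟨x, hx, ?_⟩
      have htri := norm_sub_le_norm_sub_add_norm_sub y z x
      have hes : e (n + (m + 1)) = e (n + m) / 2 := he_succ (n + m)
      rw [hes]
      linarith
  -- total boundedness
  have hTB : TotallyBounded (⋃ n, F n) := by
    rw [Metric.totallyBounded_iff]
    intro ε hε
    obtain ⟨n, hn⟩ : ∃ n, e n < ε / 6 := by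
      obtain ⟨n, hn⟩ := exists_pow_lt_of_lt_one (x := ε / 6) (y := (2 : ℝ)⁻¹)
        (by linarith) (by norm_num)
      exact ⟨n, hn⟩
    refine ⟨⋃ j ∈ Finset.range (n + 1), F j, ?_, ?_⟩
    · exact Set.Finite.biUnion (Finset.range (n + 1)).finite_toSet fun j _ => hFfin j
    · rintro y hy
      obtain ⟨m, hym⟩ := Set.mem_iUnion.mp hy
      rcases le_or_gt m n with hmn | hmn
      · refine Set.mem_biUnion ?_ (Metric.mem_ball_self hε)
        exact Set.mem_biUnion (Finset.mem_range.mpr (Nat.lt_succ_of_le hmn)) hym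
      · have hym' : y ∈ F (n + (m - n)) := by
          rwa [Nat.add_sub_cancel' (le_of_lt hmn)]
        obtain ⟨x, hx, hyx⟩ := hFchain n (m - n) y hym'
        have hxt : x ∈ ⋃ j ∈ Finset.range (n + 1), F j :=
          Set.mem_biUnion (Finset.mem_range.mpr (Nat.lt_succ_self n)) hx
        refine Set.mem_biUnion hxt ?_
        rw [Metric.mem_ball, dist_eq_norm]
        have := he_pos (n + (m - n))
        calc ‖y - x‖ ≤ 6 * (e n - e (n + (m - n))) := hyx
          _ < 6 * e n := by linarith
          _ < ε := by linarith
  -- the compact set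
  refine ⟨closure (⋃ n, F n),
    TotallyBounded.isCompact_of_isClosed hTB.closure isClosed_closure, ?_⟩
  apply Set.Subset.antisymm
  · rintro _ ⟨x, hx, rfl⟩
    refine mem_of_approx hdis hKq fun ε hε => ?_
    obtain ⟨y, hy, hxy⟩ := Metric.mem_closure_iff.mp hx ε hε
    obtain ⟨m, hym⟩ := Set.mem_iUnion.mp hy
    refine ⟨Quot.mk (Rel G) y, hFKq m y hym, ?_⟩
    calc dQ G (Quot.mk (Rel G) x) (Quot.mk (Rel G) y) ≤ ‖x - y‖ := dQ_le_norm x y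
      _ = dist x y := (dist_eq_norm x y).symm
      _ < ε := hxy
  · intro q hq
    have hsex : ∀ n : ℕ, ∃ s, s ∈ S n ∧ dQ G q s < e n := by
      intro n
      have := hScov n hq
      rw [Set.mem_iUnion₂] at this
      obtain ⟨s, hs1, hs2⟩ := this
      exact ⟨s, hs1, hs2⟩
    choose s hs1 hs2 using hsex
    let c : ℕ → H := fun n => Nat.rec (s 0).out (fun n cn => pk (s (n + 1)) cn n) n
    have hc0 : c 0 = (s 0).out := rfl
    have hcs : ∀ n, c (n + 1) = pk (s (n + 1)) (c n) n := fun n => rfl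
    have hPc : ∀ n, Quot.mk (Rel G) (c n) = s n := by
      intro n
      cases n with
      | zero => exact Quot.out_eq (s 0)
      | succ n => rw [hcs n]; exact hpk1 _ _ _
    have hdQb : ∀ n, dQ G (s (n + 1)) (Quot.mk (Rel G) (c n)) ≤ 2 * e n := by
      intro n
      rw [hPc n]
      have h1 := dQ_tri (G := G) (s (n + 1)) q (s n)
      have h2 : dQ G (s (n + 1)) q < e (n + 1) := by
        rw [dQ_comm]; exact hs2 (n + 1)
      have h3 := hs2 n
      have h4 := he_succ n
      have h5 := he_pos n
      linarith
    have hcF : ∀ n, c n ∈ F n := by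
      intro n
      induction n with
      | zero =>
        rw [hF0, hc0]
        exact Set.mem_image_of_mem _ (hs1 0)
      | succ n ih =>
        rw [hFs n, hcs n]
        exact ⟨(s (n + 1), c n), ⟨hs1 (n + 1), ih, hdQb n⟩, rfl⟩
    have hcstep : ∀ n, ‖c (n + 1) - c n‖ ≤ 3 * e n := by
      intro n
      rw [hcs n]
      have h1 := hpk2 (s (n + 1)) (c n) n
      have h2 := hdQb n
      linarith
    have hcauchy : CauchySeq c := by
      refine cauchySeq_of_le_geometric 2⁻¹ 3 (by norm_num) fun n => ?_
      rw [dist_eq_norm, norm_sub_rev]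
      exact hcstep n
    obtain ⟨x, hx⟩ := cauchySeq_tendsto_of_complete hcauchy
    have hxnorm : Tendsto (fun n => ‖x - c n‖) atTop (𝓝 0) := by
      have := tendsto_iff_norm_sub_tendsto_zero.mp hx
      simpa [norm_sub_rev] using this
    refine ⟨x, ?_, ?_⟩
    · exact mem_closure_of_tendsto hx
        (Filter.Eventually.of_forall fun n => Set.mem_iUnion.mpr ⟨n, hcF n⟩)
    · refine dQ_eq_zero hdis ?_
      have hb : ∀ n, dQ G (Quot.mk (Rel G) x) q ≤ ‖x - c n‖ + e n := by
        intro n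
        have h1 := dQ_tri (G := G) (Quot.mk (Rel G) x) (Quot.mk (Rel G) (c n)) q
        have h2 : dQ G (Quot.mk (Rel G) x) (Quot.mk (Rel G) (c n)) ≤ ‖x - c n‖ :=
          dQ_le_norm x (c n)
        have h3 : dQ G (Quot.mk (Rel G) (c n)) q ≤ e n := by
          rw [hPc n, dQ_comm]
          exact le_of_lt (hs2 n)
        linarith
      have ht : Tendsto (fun n => ‖x - c n‖ + e n) atTop (𝓝 (0 + 0)) :=
        hxnorm.add he_lim
      rw [add_zero] at ht
      have hle := ge_of_tendsto' ht hb
      exact le_antisymm hle (dQ_nonneg _ _)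

end DisAux

/-- **Theorem.** If `G` is a dislocation group of unitary operators on a complex Hilbert
space `H`, then every compact subset of the orbit space `H/G` (with the quotient topology)
is the image under the canonical projection of a compact subset of `H`. -/
theorem dislocation_compact_lift
    (H : Type*) [NormedAddCommGroup H] [InnerProductSpace ℂ H] [CompleteSpace H]
    (G : Subgroup (H ≃ₗᵢ[ℂ] H))
    -- dislocation hypothesis
    (hdis : ∀ g : ℕ → G,
      ¬ (∀ x y : H, Tendsto (fun n => (inner ℂ ((g n : H ≃ₗᵢ[ℂ] H) x) y : ℂ)) atTop (𝓝 0)) →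
      ∃ φ : ℕ → ℕ, StrictMono φ ∧ ∃ h : G,
        ∀ x : H, Tendsto (fun k => ‖(g (φ k) : H ≃ₗᵢ[ℂ] H) x - (h : H ≃ₗᵢ[ℂ] H) x‖)
          atTop (𝓝 0)) :
    ∀ Kq : Set (Quot (fun x y : H => ∃ g : G, (g : H ≃ₗᵢ[ℂ] H) y = x)),
      IsCompact Kq →
      ∃ K : Set H, IsCompact K ∧
        Quot.mk (fun x y : H => ∃ g : G, (g : H ≃ₗᵢ[ℂ] H) y = x) '' K = Kq := by
  intro Kq hKq
  exact DisAux.main hdis Kq hKq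

end
end

section
/- Let d ≥ 1, let t ∈ ℝ with t ≠ 0, and let f ∈ 𝓢(ℝ^d). Then the dispersive estimate holds: sup_{x ∈ ℝ^d} |𝓕^{−1}(ξ ↦ e^{−4π²it|ξ|²} 𝓕f(ξ))(x)| ≤ (4π|t|)^{−d/2} ∫_{ℝ^d} |f(y)| dy; that is, ‖e^{itΔ}f‖_{L^∞(ℝ^d)} ≤ (4π|t|)^{−d/2} ‖f‖_{L¹(ℝ^d)}. -/
open MeasureTheory Real Complex SchwartzMap
open scoped FourierTransform RealInnerProductSpace

noncomputable section

/-- Euclidean space `ℝ^d`. -/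
abbrev Ed (d : ℕ) := EuclideanSpace ℝ (Fin d)

/-- Free Schrödinger propagator `e^{itΔ}f = 𝓕⁻¹ (e^{-4π²it|ξ|²} 𝓕 f)`. -/
def freeProp {d : ℕ} (t : ℝ) (f : Ed d → ℂ) : Ed d → ℂ :=
  FourierTransformInv.fourierInv
    (fun ξ : Ed d => Complex.exp ((-(4 * π ^ 2 * t * ‖ξ‖ ^ 2) : ℝ) * Complex.I) *
      FourierTransform.fourier f ξ)

/-- **Dispersive estimate:** for `t ≠ 0` and Schwartz `f`,
`‖e^{itΔ}f‖_{L^∞} ≤ (4π|t|)^{-d/2} ‖f‖_{L¹}`. -/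
theorem freeProp_dispersive
    (d : ℕ) (hd : 1 ≤ d) (t : ℝ) (ht : t ≠ 0) (f : SchwartzMap (Ed d) ℂ) :
    ∀ x : Ed d, ‖freeProp t (⇑f) x‖ ≤
      (4 * π * |t|) ^ (-(d : ℝ) / 2) * ∫ y : Ed d, ‖f y‖ := by
  intro x
  have hπ : (0:ℝ) < π := Real.pi_pos
  have h4t : (0:ℝ) < 4 * π * |t| := by positivity
  set C : ℝ := (4 * π * |t|) ^ (-(d : ℝ) / 2) * ∫ y : Ed d, ‖f y‖ with hC
  have hFf : Integrable (𝓕 ⇑f) (volume : Measure (Ed d)) := by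
    simpa [SchwartzMap.fourier_coe] using (SchwartzMap.fourierTransformCLM ℝ f).integrable (μ := (volume : Measure (Ed d)))
  -- the regularized family
  set G : ℝ → Ed d → ℂ := fun ε ξ =>
    Complex.exp (-((ε : ℂ) + 4*π^2*t*Complex.I) * ‖ξ‖^2 + 2*π*Complex.I*⟪x, ξ⟫) with hG
  set F : ℝ → ℂ := fun ε => ∫ ξ : Ed d, 𝓕 (⇑f) ξ • G ε ξ with hF
  -- real part computation
  have hre : ∀ ε : ℝ, ∀ ξ : Ed d,
      (-((ε : ℂ) + 4*π^2*t*Complex.I) * ‖ξ‖^2 + 2*π*Complex.I*⟪x, ξ⟫).re = -(ε * ‖ξ‖^2) := by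
    intro ε ξ
    simp [Complex.add_re, Complex.mul_re, Complex.mul_im, pow_two]
  -- Step 1: convergence to freeProp
  have key : freeProp t (⇑f) x = ∫ ξ : Ed d, 𝓕 (⇑f) ξ • G 0 ξ := by
    rw [freeProp, Real.fourierInv_eq']
    congr 1 with ξ
    rw [smul_eq_mul, smul_eq_mul, ← mul_assoc, ← Complex.exp_add, mul_comm (𝓕 (⇑f) ξ), hG]
    congr 2
    push_cast
    rw [real_inner_comm]
    ring
  have tendsto_F : Filter.Tendsto F (nhdsWithin 0 (Set.Ioi 0)) (nhds (freeProp t (⇑f) x)) := by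
    rw [key, hF]
    apply tendsto_integral_filter_of_dominated_convergence (fun ξ => ‖𝓕 (⇑f) ξ‖)
    · filter_upwards with ε
      have hcont : Continuous fun ξ : Ed d =>
          -((ε:ℂ) + 4*π^2*t*Complex.I) * ‖ξ‖^2 + 2*π*Complex.I*(⟪x, ξ⟫ : ℂ) :=
        (continuous_const.mul ((Complex.continuous_ofReal.comp continuous_norm).pow 2)).add
          (continuous_const.mul (Complex.continuous_ofReal.comp
            (continuous_const.inner continuous_id)))
      exact hFf.1.smul (Complex.continuous_exp.comp hcont).aestronglyMeasurable
    · filter_upwards [self_mem_nhdsWithin] with ε (hε : ε ∈ Set.Ioi (0:ℝ))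
      filter_upwards with ξ
      rw [norm_smul]
      have h1 : ‖G ε ξ‖ ≤ 1 := by
        rw [hG]
        simp only [Complex.norm_exp]
        rw [hre]
        exact Real.exp_le_one_iff.2 (by nlinarith [sq_nonneg ‖ξ‖, le_of_lt (Set.mem_Ioi.mp hε)])
      calc ‖𝓕 (⇑f) ξ‖ * ‖G ε ξ‖ ≤ ‖𝓕 (⇑f) ξ‖ * 1 := by
            gcongr
        _ = ‖𝓕 (⇑f) ξ‖ := mul_one _
    · exact hFf.norm
    · filter_upwards with ξ
      apply Filter.Tendsto.mono_left _ nhdsWithin_le_nhds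
      have : Continuous fun ε : ℝ => 𝓕 (⇑f) ξ • G ε ξ := by
        apply Continuous.fun_smul continuous_const
        apply Complex.continuous_exp.comp
        exact (((Complex.continuous_ofReal.add continuous_const).neg.mul
          continuous_const).add continuous_const)
      exact this.tendsto 0
  -- Step 2: uniform bound
  have bound : ∀ ε ∈ Set.Ioi (0:ℝ), ‖F ε‖ ≤ C := by
    intro ε hε
    have hε' : (0:ℝ) < ε := hε
    have hb : 0 < ((ε : ℂ) + 4*π^2*t*Complex.I).re := by
      simp [Complex.add_re, Complex.mul_re, Complex.mul_im, Complex.sq_norm, pow_two, hε']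
    have J : Integrable (G ε) := GaussianFourier.integrable_cexp_neg_mul_sq_norm_add hb _ _
    have mult : F ε = ∫ y : Ed d, f y • 𝓕 (G ε) y := by
      rw [hF]
      have hfl : (innerₗ (Ed d)).flip = innerₗ (Ed d) := by
        ext a b; simp [real_inner_comm]
      have h := (VectorFourier.integral_fourierIntegral_smul_eq_flip (L := innerₗ (Ed d))
        (μ := volume) Real.continuous_fourierChar continuous_inner f.integrable J)
      rw [hfl] at h
      exact h
    have gauss : ∀ y : Ed d, 𝓕 (G ε) y =
        (π / ((ε : ℂ) + 4*π^2*t*Complex.I)) ^ (Module.finrank ℝ (Ed d) / 2 : ℂ) *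
          Complex.exp (-π ^ 2 * ‖x - y‖ ^ 2 / ((ε : ℂ) + 4*π^2*t*Complex.I)) := fun y =>
      fourier_gaussian_innerProductSpace' hb x y
    -- pointwise norm bound on the kernel
    have hnorm : ∀ y : Ed d, ‖𝓕 (G ε) y‖ ≤ (4 * π * |t|) ^ (-(d : ℝ) / 2) := by
      intro y
      rw [gauss y, norm_mul]
      have habs : ‖((ε : ℂ) + 4*π^2*t*Complex.I)‖ ≥ 4*π^2*|t| := by
        have := Complex.abs_im_le_norm ((ε : ℂ) + 4*π^2*t*Complex.I)
        have him : ((ε : ℂ) + 4*π^2*t*Complex.I).im = 4*π^2*t := by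
          simp [Complex.add_im, Complex.mul_im, Complex.mul_re, pow_two]
        rw [him] at this
        calc 4*π^2*|t| = |4*π^2*t| := by
              rw [abs_mul]; congr 1; rw [abs_of_pos (by positivity)]
          _ ≤ _ := this
      have h2 : ‖Complex.exp (-π ^ 2 * ‖x - y‖ ^ 2 / ((ε : ℂ) + 4*π^2*t*Complex.I))‖ ≤ 1 := by
        simp only [Complex.norm_exp]
        apply Real.exp_le_one_iff.2
        rw [Complex.div_re]
        have hre1 : (-(π:ℂ) ^ 2 * ‖x - y‖ ^ 2).re = -(π^2 * ‖x-y‖^2) := by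
          simp [Complex.mul_re, Complex.mul_im, pow_two]
        have him1 : (-(π:ℂ) ^ 2 * ‖x - y‖ ^ 2).im = 0 := by
          simp [Complex.mul_im, Complex.mul_re, pow_two]
        rw [hre1, him1]
        have hbre : ((ε : ℂ) + 4*π^2*t*Complex.I).re = ε := by
          simp [Complex.add_re, Complex.mul_re, Complex.mul_im, pow_two]
        rw [hbre]
        simp only [zero_mul, zero_div, add_zero]
        apply div_nonpos_of_nonpos_of_nonneg
        · nlinarith [mul_nonneg (mul_nonneg (sq_nonneg π) (sq_nonneg ‖x - y‖)) hε'.le]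
        · exact Complex.normSq_nonneg _
      have h1 : ‖(π / ((ε : ℂ) + 4*π^2*t*Complex.I)) ^ (Module.finrank ℝ (Ed d) / 2 : ℂ)‖ ≤
          (4 * π * |t|) ^ (-(d : ℝ) / 2) := by
        have hfr : (Module.finrank ℝ (Ed d)) = d := finrank_euclideanSpace_fin
        have hcast : ((Module.finrank ℝ (Ed d)) / 2 : ℂ) = (((d : ℝ) / 2 : ℝ) : ℂ) := by
          rw [hfr]; push_cast; ring
        rw [hcast]
        rw [Complex.norm_cpow_real]
        have habs2 : ‖((π : ℂ) / ((ε : ℂ) + 4*π^2*t*Complex.I))‖ ≤ 1 / (4*π*|t|) := by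
          rw [norm_div, Complex.norm_real, Real.norm_eq_abs, abs_of_pos hπ]
          rw [div_le_div_iff₀ (lt_of_lt_of_le (by positivity) habs) (by positivity)]
          calc π * (4*π*|t|) = 4*π^2*|t| := by ring
            _ ≤ ‖((ε : ℂ) + 4*π^2*t*Complex.I)‖ := habs
            _ = 1 * ‖((ε : ℂ) + 4*π^2*t*Complex.I)‖ := (one_mul _).symm
        calc ‖((π : ℂ) / ((ε : ℂ) + 4*π^2*t*Complex.I))‖ ^ ((d:ℝ)/2)
            ≤ (1 / (4*π*|t|)) ^ ((d:ℝ)/2) :=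
              Real.rpow_le_rpow (by positivity) habs2 (by positivity)
          _ = (4 * π * |t|) ^ (-(d : ℝ) / 2) := by
              rw [one_div, Real.inv_rpow h4t.le, neg_div, Real.rpow_neg h4t.le]
      calc ‖(π / ((ε : ℂ) + 4*π^2*t*Complex.I)) ^ (Module.finrank ℝ (Ed d) / 2 : ℂ)‖ *
            ‖Complex.exp (-π ^ 2 * ‖x - y‖ ^ 2 / ((ε : ℂ) + 4*π^2*t*Complex.I))‖
          ≤ (4 * π * |t|) ^ (-(d : ℝ) / 2) * 1 := by
            apply mul_le_mul h1 h2 (norm_nonneg _) (by positivity)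
        _ = (4 * π * |t|) ^ (-(d : ℝ) / 2) := mul_one _
    rw [mult]
    calc ‖∫ y : Ed d, f y • 𝓕 (G ε) y‖ ≤ ∫ y : Ed d, ‖f y • 𝓕 (G ε) y‖ :=
          norm_integral_le_integral_norm _
      _ ≤ ∫ y : Ed d, (4 * π * |t|) ^ (-(d : ℝ) / 2) * ‖f y‖ := by
          apply integral_mono_of_nonneg
          · filter_upwards with y using norm_nonneg _
          · exact f.integrable.norm.const_mul _
          · filter_upwards with y
            rw [norm_smul, mul_comm]
            exact mul_le_mul_of_nonneg_right (hnorm y) (norm_nonneg _)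
      _ = C := by rw [hC, integral_const_mul]
  -- Step 3: conclude
  refine le_of_tendsto tendsto_F.norm ?_
  filter_upwards [self_mem_nhdsWithin] with ε hε using bound ε hε



end
end
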